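/- Let V be a finite-dimensional real vector space with a positive definite inner product ⟨·,·⟩. Every algebraic curvature tensor R on V is a finite linear combination of tensors R_φ, where φ ranges over ⟨·,·⟩-skew-adjoint linear maps V → V; i.e. the tensors R_φ span the vector space of algebraic curvature tensors on V. -/

import Mathlib

open Finset

namespace Stmt18Aux

variable {V : Type*} [AddCommGroup V] [Module ℝ V] {ι : Type*}

/-- Outer (tensor) product of two linear functionals, as a bilinear form. -/
noncomputable def outer (L M : V →ₗ[ℝ] ℝ) : V →ₗ[ℝ] V →ₗ[ℝ] ℝ :=
  LinearMap.mk₂ ℝ (fun x y => L x * M y)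
    (fun x x' y => by simp [add_mul])
    (fun r x y => by simp [smul_eq_mul]; ring)
    (fun x y y' => by simp [mul_add])
    (fun r x y => by simp [smul_eq_mul]; ring)

@[simp] lemma outer_apply (L M : V →ₗ[ℝ] ℝ) (x y : V) :
    outer L M x y = L x * M y := rfl

/-- The elementary alternating 2-form associated to a pair of basis indices. -/
noncomputable def alt (b : Module.Basis ι ℝ V) (p : ι × ι) : V →ₗ[ℝ] V →ₗ[ℝ] ℝ :=
  outer (b.coord p.1) (b.coord p.2) - outer (b.coord p.2) (b.coord p.1)

@[simp] lemma alt_apply (b : Module.Basis ι ℝ V) (p : ι × ι) (x y : V) :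
    alt b p x y = b.repr x p.1 * b.repr y p.2 - b.repr x p.2 * b.repr y p.1 := by
  simp [alt, Module.Basis.coord_apply]

lemma alt_skew (b : Module.Basis ι ℝ V) (p : ι × ι) (x y : V) :
    alt b p x y = - alt b p y x := by
  simp only [alt_apply]; ring

/-- Expansion of a bilinear form in a basis. -/
lemma expand2' [Fintype ι] (b : Module.Basis ι ℝ V) (S : V →ₗ[ℝ] V →ₗ[ℝ] ℝ) (z w : V) :
    S z w = ∑ q : ι × ι, b.repr z q.1 * b.repr w q.2 * S (b q.1) (b q.2) := by
  rw [Fintype.sum_prod_type]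
  conv_lhs => rw [← b.sum_repr z, ← b.sum_repr w]
  simp only [map_sum, map_smul, LinearMap.sum_apply, LinearMap.smul_apply, smul_eq_mul,
    Finset.mul_sum]
  rw [Finset.sum_comm]
  exact Finset.sum_congr rfl fun a _ => Finset.sum_congr rfl fun c _ => by ring

/-- Key contraction identity: contracting an antisymmetric bilinear form against all the
elementary alternating forms reproduces twice the form. -/
lemma sum_alt [Fintype ι] (b : Module.Basis ι ℝ V) (S : V →ₗ[ℝ] V →ₗ[ℝ] ℝ)
    (hS : ∀ z w, S w z = -S z w) (z w : V) :
    ∑ q : ι × ι, S (b q.1) (b q.2) * alt b q z w = 2 * S z w := by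
  have e := expand2' b S z w
  have e2 : ∑ q : ι × ι, b.repr z q.2 * b.repr w q.1 * S (b q.1) (b q.2) = - S z w := by
    have h := Fintype.sum_equiv (Equiv.prodComm ι ι)
      (fun q : ι × ι => b.repr z q.1 * b.repr w q.2 * S (b q.2) (b q.1))
      (fun q : ι × ι => b.repr z q.2 * b.repr w q.1 * S (b q.1) (b q.2))
      (fun q => rfl)
    rw [← h]
    calc ∑ q : ι × ι, b.repr z q.1 * b.repr w q.2 * S (b q.2) (b q.1)
        = ∑ q : ι × ι, -(b.repr z q.1 * b.repr w q.2 * S (b q.1) (b q.2)) := by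
          refine Finset.sum_congr rfl fun q _ => ?_
          rw [hS (b q.1) (b q.2)]; ring
      _ = - S z w := by rw [Finset.sum_neg_distrib, ← e]
  calc ∑ q : ι × ι, S (b q.1) (b q.2) * alt b q z w
      = ∑ q : ι × ι, (b.repr z q.1 * b.repr w q.2 * S (b q.1) (b q.2)
          - b.repr z q.2 * b.repr w q.1 * S (b q.1) (b q.2)) := by
        refine Finset.sum_congr rfl fun q _ => ?_
        simp only [alt_apply]; ring
    _ = 2 * S z w := by rw [Finset.sum_sub_distrib, ← e, e2]; ring

/-- The alternating 2-forms used in the decomposition, indexed by pairs of index pairs plus a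
polarization label in `Fin 3`. -/
noncomputable def form (b : Module.Basis ι ℝ V) (s : (ι × ι) × (ι × ι) × Fin 3) :
    V →ₗ[ℝ] V →ₗ[ℝ] ℝ :=
  ![alt b s.1 + alt b s.2.1, alt b s.1, alt b s.2.1] s.2.2

lemma form_skew (b : Module.Basis ι ℝ V) (s : (ι × ι) × (ι × ι) × Fin 3) (x y : V) :
    form b s x y = - form b s y x := by
  obtain ⟨p, q, k⟩ := s
  obtain ⟨n, hn⟩ := k
  match n, hn with
  | 0, hn =>
    show (alt b p + alt b q) x y = -((alt b p + alt b q) y x)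
    simp only [LinearMap.add_apply, alt_apply]; ring
  | 1, hn =>
    show alt b p x y = -(alt b p y x)
    exact alt_skew b p x y
  | 2, hn =>
    show alt b q x y = -(alt b q y x)
    exact alt_skew b q x y

/-- The coefficients used in the decomposition. -/
noncomputable def coeff (b : Module.Basis ι ℝ V) (R : V →ₗ[ℝ] V →ₗ[ℝ] V →ₗ[ℝ] V →ₗ[ℝ] ℝ)
    (s : (ι × ι) × (ι × ι) × Fin 3) : ℝ :=
  ![R (b s.1.1) (b s.1.2) (b s.2.1.1) (b s.2.1.2) / 8,
    -(R (b s.1.1) (b s.1.2) (b s.2.1.1) (b s.2.1.2) / 8),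
    -(R (b s.1.1) (b s.1.2) (b s.2.1.1) (b s.2.1.2) / 8)] s.2.2

/-- The skew-adjoint endomorphism associated to a bilinear form `β` via the nondegenerate
form `B`. -/
noncomputable def skewOf [FiniteDimensional ℝ V] (B : LinearMap.BilinForm ℝ V)
    (hB : B.Nondegenerate) (β : V →ₗ[ℝ] V →ₗ[ℝ] ℝ) : V →ₗ[ℝ] V :=
  (LinearMap.BilinForm.toDual B hB).symm.toLinearMap ∘ₗ β

lemma skewOf_apply [FiniteDimensional ℝ V] (B : LinearMap.BilinForm ℝ V)
    (hB : B.Nondegenerate) (β : V →ₗ[ℝ] V →ₗ[ℝ] ℝ) (x y : V) :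
    B (skewOf B hB β x) y = β x y := by
  simp [skewOf]

end Stmt18Aux

open Stmt18Aux

/-- Over a positive definite inner product space, every algebraic curvature
tensor is a finite linear combination of the tensors R_φ with φ skew-adjoint. -/
theorem stmt18 {V : Type*} [AddCommGroup V] [Module ℝ V] [FiniteDimensional ℝ V]
    (B : V →ₗ[ℝ] V →ₗ[ℝ] ℝ)
    (hBsymm : ∀ x y, B x y = B y x)
    (hBpos : ∀ x, x ≠ 0 → 0 < B x x)
    (R : V →ₗ[ℝ] V →ₗ[ℝ] V →ₗ[ℝ] V →ₗ[ℝ] ℝ)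
    (hR1 : ∀ x y z w, R x y z w = -R y x z w)
    (hR2 : ∀ x y z w, R x y z w = R z w x y)
    (hR3 : ∀ x y z w, R x y z w + R y z x w + R z x y w = 0) :
    ∃ (N : ℕ) (c : Fin N → ℝ) (φ : Fin N → (V →ₗ[ℝ] V)),
      (∀ i, ∀ x y, B (φ i x) y = -B x (φ i y)) ∧
      (∀ x y z w, R x y z w =
        ∑ i, c i * (B (φ i y) z * B (φ i x) w - B (φ i x) z * B (φ i y) w
          - 2 * B (φ i x) y * B (φ i z) w)) := by
  classical
  have hB : LinearMap.BilinForm.Nondegenerate B := by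
    refine ⟨fun x hx => ?_, fun x hx => ?_⟩ <;>
    · by_contra h
      exact (hBpos x h).ne' (hx x)
  set ι := Fin (Module.finrank ℝ V) with hιdef
  let b : Module.Basis ι ℝ V := Module.finBasis ℝ V
  -- antisymmetry in the last two slots
  have hlast : ∀ u v a c : V, R u v c a = - R u v a c := fun u v a c => by
    rw [hR2 u v c a, hR1 c a u v, hR2 a c u v]
  -- the double-contraction identity
  have main : ∀ x y z w : V,
      ∑ p : ι × ι, ∑ q : ι × ι,
        R (b p.1) (b p.2) (b q.1) (b q.2) * alt b p x y * alt b q z w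
      = 4 * R x y z w := by
    intro x y z w
    have inner : ∀ p : ι × ι,
        ∑ q : ι × ι, R (b p.1) (b p.2) (b q.1) (b q.2) * alt b q z w
        = 2 * R (b p.1) (b p.2) z w := fun p =>
      sum_alt b (R (b p.1) (b p.2)) (fun a c => hlast (b p.1) (b p.2) a c) z w
    calc ∑ p : ι × ι, ∑ q : ι × ι,
          R (b p.1) (b p.2) (b q.1) (b q.2) * alt b p x y * alt b q z w
        = ∑ p : ι × ι,
            (∑ q : ι × ι, R (b p.1) (b p.2) (b q.1) (b q.2) * alt b q z w) * alt b p x y := by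
          refine Finset.sum_congr rfl fun p _ => ?_
          rw [Finset.sum_mul]
          exact Finset.sum_congr rfl fun q _ => by ring
      _ = ∑ p : ι × ι, (2 * R (b p.1) (b p.2) z w) * alt b p x y := by
          exact Finset.sum_congr rfl fun p _ => by rw [inner p]
      _ = 2 * ∑ p : ι × ι, R z w (b p.1) (b p.2) * alt b p x y := by
          rw [Finset.mul_sum]
          refine Finset.sum_congr rfl fun p _ => ?_
          rw [hR2 (b p.1) (b p.2) z w]; ring
      _ = 2 * (2 * R z w x y) := by
          rw [sum_alt b (R z w) (fun a c => hlast z w a c) x y]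
      _ = 4 * R x y z w := by rw [hR2 z w x y]; ring
  -- the swapped version
  have swap : ∀ x y z w : V,
      ∑ p : ι × ι, ∑ q : ι × ι,
        R (b p.1) (b p.2) (b q.1) (b q.2) * alt b q x y * alt b p z w
      = 4 * R x y z w := by
    intro x y z w
    rw [Finset.sum_comm]
    have hsymm : ∀ p q : ι × ι,
        R (b q.1) (b q.2) (b p.1) (b p.2) * alt b p x y * alt b q z w
        = R (b p.1) (b p.2) (b q.1) (b q.2) * alt b p x y * alt b q z w := fun p q => by
      rw [hR2 (b q.1) (b q.2) (b p.1) (b p.2)]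
    simp_rw [hsymm]
    exact main x y z w
  -- the representation of R as a sum of squares of alternating forms
  have rep : ∀ x y z w : V,
      ∑ s : (ι × ι) × (ι × ι) × Fin 3,
        coeff b R s * (form b s x y * form b s z w) = R x y z w := by
    intro x y z w
    have step : ∀ p q : ι × ι,
        (∑ k : Fin 3, coeff b R (p, q, k) * (form b (p, q, k) x y * form b (p, q, k) z w))
        = R (b p.1) (b p.2) (b q.1) (b q.2) * alt b p x y * alt b q z w / 8
          + R (b p.1) (b p.2) (b q.1) (b q.2) * alt b q x y * alt b p z w / 8 := by
      intro p q
      simp only [Fin.sum_univ_three, coeff, form, Matrix.cons_val_zero, Matrix.cons_val_one,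
        Matrix.head_cons, Matrix.cons_val_two, Matrix.tail_cons, LinearMap.add_apply]
      ring
    have step2 : ∀ p : ι × ι,
        (∑ s' : (ι × ι) × Fin 3,
          coeff b R (p, s') * (form b (p, s') x y * form b (p, s') z w))
        = ∑ q : ι × ι,
            (R (b p.1) (b p.2) (b q.1) (b q.2) * alt b p x y * alt b q z w / 8
              + R (b p.1) (b p.2) (b q.1) (b q.2) * alt b q x y * alt b p z w / 8) := by
      intro p
      rw [Fintype.sum_prod_type]
      exact Finset.sum_congr rfl fun q _ => step p q
    rw [Fintype.sum_prod_type]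
    simp_rw [step2]
    simp only [Finset.sum_add_distrib]
    simp only [← Finset.sum_div]
    rw [main x y z w, swap x y z w]
    ring
  -- Bianchi for the representation
  have bianchi : ∀ x y z w : V,
      ∑ s : (ι × ι) × (ι × ι) × Fin 3,
        coeff b R s * (form b s x y * form b s z w + form b s y z * form b s x w
          + form b s z x * form b s y w) = 0 := by
    intro x y z w
    have h3 := hR3 x y z w
    rw [← rep x y z w, ← rep y z x w, ← rep z x y w] at h3
    rw [← h3]
    rw [← Finset.sum_add_distrib, ← Finset.sum_add_distrib]
    exact Finset.sum_congr rfl fun s _ => by ring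
  -- assemble
  let e : Fin (Fintype.card ((ι × ι) × (ι × ι) × Fin 3)) ≃ (ι × ι) × (ι × ι) × Fin 3 :=
    (Fintype.equivFin _).symm
  refine ⟨Fintype.card ((ι × ι) × (ι × ι) × Fin 3),
    fun i => -(coeff b R (e i)) / 3,
    fun i => skewOf B hB (form b (e i)), ?_, ?_⟩
  · intro i x y
    rw [skewOf_apply, hBsymm x (skewOf B hB (form b (e i)) y), skewOf_apply]
    exact form_skew b (e i) x y
  · intro x y z w
    have hsum : ∑ i, (-(coeff b R (e i)) / 3) *
          (B (skewOf B hB (form b (e i)) y) z * B (skewOf B hB (form b (e i)) x) w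
            - B (skewOf B hB (form b (e i)) x) z * B (skewOf B hB (form b (e i)) y) w
            - 2 * B (skewOf B hB (form b (e i)) x) y * B (skewOf B hB (form b (e i)) z) w)
        = ∑ s : (ι × ι) × (ι × ι) × Fin 3, (-(coeff b R s) / 3) *
          (form b s y z * form b s x w - form b s x z * form b s y w
            - 2 * form b s x y * form b s z w) := by
      refine Fintype.sum_equiv e _ _ fun i => ?_
      simp only [skewOf_apply]
    rw [hsum]
    have split : ∀ s : (ι × ι) × (ι × ι) × Fin 3,
        (-(coeff b R s) / 3) *
          (form b s y z * form b s x w - form b s x z * form b s y w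
            - 2 * form b s x y * form b s z w)
        = (-1 / 3) * (coeff b R s * (form b s x y * form b s z w + form b s y z * form b s x w
            + form b s z x * form b s y w))
          + coeff b R s * (form b s x y * form b s z w) := by
      intro s
      rw [form_skew b s x z]
      ring
    simp_rw [split]
    rw [Finset.sum_add_distrib, ← Finset.mul_sum, bianchi x y z w, rep x y z w]
    ring
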